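/- Let S be a proper set of intervals and T ⊆ S. The 0-1 constraint matrix M whose rows are indexed by T, columns by S (sorted by right endpoint), with M[t][s] = 1 iff intervals t and s intersect, has the consecutive-ones property in each row, and hence is totally unimodular. -/

import Mathlib

attribute [local instance] Classical.propDecidable

private lemma neg_mem_signRange {x : ℚ} (h : x ∈ Set.range (SignType.cast : SignType → ℚ)) :
    -x ∈ Set.range (SignType.cast : SignType → ℚ) := by
  obtain ⟨s, rfl⟩ := h
  exact ⟨-s, by simp⟩

/-- An upward-closed predicate on `Fin p` is a final segment. -/
private lemma exists_bound_of_upward {p : ℕ} (P : Fin p → Prop)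
    (hP : ∀ ⦃j j' : Fin p⦄, j ≤ j' → P j → P j') :
    ∃ c : ℕ, ∀ j : Fin p, P j ↔ c ≤ j.val := by
  by_cases h : ∃ j, P j
  · obtain ⟨j0, hj0, hmin⟩ :=
      (Finset.univ.filter P).exists_min_image (fun j => j.val)
        ⟨h.choose, by simp [h.choose_spec]⟩
    refine ⟨j0.val, fun j => ⟨fun hj => ?_, fun hj => hP ?_ (by simpa using hj0)⟩⟩
    · exact hmin j (by simpa using hj)
    · exact hj
  · push_neg at h
    exact ⟨p, fun j => by simp [h j, Nat.not_le.mpr j.isLt]⟩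

/-- A square 0-1 matrix in which each row's ones occupy a consecutive set of columns
has determinant in `{-1, 0, 1}`. -/
private lemma interval_det : ∀ (p : ℕ) (B : Matrix (Fin p) (Fin p) ℚ),
    (∀ i, ∃ a b : ℕ, ∀ j, B i j = if a ≤ j.val ∧ j.val < b then 1 else 0) →
    B.det ∈ Set.range (SignType.cast : SignType → ℚ) := by
  intro p
  induction p with
  | zero => intro B _; exact ⟨1, by simp [Matrix.det_fin_zero]⟩
  | succ p ih =>
    intro B hB
    choose a b hab using hB
    set S : Finset (Fin (p + 1)) := Finset.univ.filter (fun i => a i = 0 ∧ 0 < b i) with hS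
    by_cases hSn : S.Nonempty
    · obtain ⟨i0, hi0S, hi0min⟩ := S.exists_min_image b hSn
      have hi0 : a i0 = 0 ∧ 0 < b i0 := by simpa [hS] using hi0S
      -- row operations: subtract row i0 from every other row in S
      set c : Fin (p + 1) → ℚ := fun i => if i ∈ S ∧ i ≠ i0 then -1 else 0 with hc
      set B' : Matrix (Fin (p + 1)) (Fin (p + 1)) ℚ :=
        Matrix.of (fun i j => B i j + c i * B i0 j) with hB'
      have hdet : B'.det = B.det := by
        apply Matrix.det_eq_of_forall_row_eq_smul_add_const c i0 (by simp [hc])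
        intro i j; rfl
      -- B' is an interval matrix with explicit bounds
      set a' : Fin (p + 1) → ℕ := fun i => if i ∈ S ∧ i ≠ i0 then b i0 else a i with ha'
      have hab' : ∀ i j, B' i j = if a' i ≤ j.val ∧ j.val < b i then 1 else 0 := by
        intro i j
        by_cases hi : i ∈ S ∧ i ≠ i0
        · have hiS : a i = 0 ∧ 0 < b i := by simpa [hS] using hi.1
          have hle : b i0 ≤ b i := hi0min i hi.1
          simp only [hB', Matrix.of_apply, hc, ha', if_pos hi, hab, hiS.1, hi0.1]
          split_ifs <;> first | (exfalso; omega) | norm_num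
        · simp only [hB', Matrix.of_apply, hc, ha', if_neg hi, hab]
          norm_num
      -- the first column of B' is the standard basis vector at i0
      have hcol : ∀ i, B' i 0 = if i = i0 then 1 else 0 := by
        intro i
        rw [hab']
        by_cases hii : i = i0
        · have hni : ¬(i ∈ S ∧ i ≠ i0) := fun h => h.2 hii
          rw [if_pos hii, if_pos]
          constructor
          · have hv : a' i = a i := by simp [ha', hni]
            rw [hv, hii, hi0.1]
            simp
          · have hv : b i = b i0 := by rw [hii]
            rw [hv]
            simpa using hi0.2
        · rw [if_neg hii, if_neg]
          intro hcond
          simp only [Fin.val_zero] at hcond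
          by_cases hiS : i ∈ S
          · have hbv : a' i = b i0 := by simp [ha', hiS, hii]
            rw [hbv] at hcond
            exact absurd hcond.1 (by omega)
          · have hav : a' i = a i := by simp [ha', hiS]
            rw [hav] at hcond
            exact hiS (Finset.mem_filter.mpr
              ⟨Finset.mem_univ i, ⟨Nat.le_zero.mp hcond.1, hcond.2⟩⟩)
      -- swap rows 0 and i0
      set σ : Equiv.Perm (Fin (p + 1)) := Equiv.swap 0 i0 with hσ
      set C : Matrix (Fin (p + 1)) (Fin (p + 1)) ℚ := B'.submatrix σ id with hC
      have hdetC : C.det = Equiv.Perm.sign σ * B'.det := Matrix.det_permute σ B'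
      -- C has column 0 equal to e₀ and is an interval matrix
      have hCcol : ∀ i, C i 0 = if i = (0 : Fin (p + 1)) then 1 else 0 := by
        intro i
        have : C i 0 = B' (σ i) 0 := rfl
        rw [this, hcol]
        congr 1
        simp only [eq_iff_iff]
        constructor
        · intro h
          have := congrArg σ.symm h
          simpa [hσ] using this
        · intro h; subst h; simp [hσ]
      -- expand along column 0
      have hCdet : C.det = (C.submatrix Fin.succ Fin.succ).det := by
        rw [Matrix.det_succ_column_zero]
        rw [Finset.sum_eq_single (0 : Fin (p + 1))]
        · simp [hCcol, Fin.succAbove_zero]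
        · intro i _ hi
          simp [hCcol, hi]
        · simp
      -- the minor is an interval matrix
      have hminor : (C.submatrix Fin.succ Fin.succ).det ∈
          Set.range (SignType.cast : SignType → ℚ) := by
        apply ih
        intro i
        refine ⟨a' (σ i.succ) - 1, b (σ i.succ) - 1, fun j => ?_⟩
        have : C.submatrix Fin.succ Fin.succ i j = B' (σ i.succ) j.succ := rfl
        rw [this, hab']
        have hjs : (j.succ : Fin (p + 1)).val = j.val + 1 := rfl
        rw [hjs]
        split_ifs <;> first | rfl | (exfalso; omega)
      rw [← hCdet] at hminor
      rw [← hdet]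
      rcases Int.units_eq_one_or (Equiv.Perm.sign σ) with hs | hs <;> rw [hs] at hdetC
      · simp only [Units.val_one, Int.cast_one, one_mul] at hdetC
        rwa [← hdetC]
      · simp only [Units.val_neg, Units.val_one, Int.cast_neg, Int.cast_one, neg_mul,
          one_mul] at hdetC
        have hBC : B'.det = -C.det := by rw [hdetC, neg_neg]
        rw [hBC]
        exact neg_mem_signRange hminor
    · -- column 0 is identically zero
      refine ⟨0, ?_⟩
      rw [eq_comm]
      apply Matrix.det_eq_zero_of_column_eq_zero 0
      intro i
      have : ¬(a i = 0 ∧ 0 < b i) := fun h => hSn ⟨i, by simp [hS, h]⟩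
      rw [hab]
      simp only [Fin.val_zero]
      refine if_neg ?_
      omega

/-- Let `S` be a proper set of intervals (columns, sorted by right endpoint)
and `T ⊆ S` (rows). The 0-1 intersection matrix `M` with `M t s = 1` iff intervals `t`
and `s` intersect has the consecutive-ones property in each row, and is totally unimodular. -/
theorem proper_intervals_matrix_consecutive_ones_and_TU {k : ℕ} (l r : Fin k → ℝ)
    (hlr : ∀ i, l i ≤ r i)
    (proper : ∀ i j : Fin k, i ≠ j →
      ¬ (Set.Icc (l j) (r j) ⊆ Set.Icc (l i) (r i)))
    (hsorted : StrictMono r)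
    (T : Finset (Fin k))
    (M : Matrix {t : Fin k // t ∈ T} (Fin k) ℚ)
    (hM : ∀ t s, M t s =
      if (Set.Icc (l t.1) (r t.1) ∩ Set.Icc (l s) (r s)).Nonempty then 1 else 0) :
    (∀ t, ∀ s₁ s₂ s₃ : Fin k, s₁ < s₂ → s₂ < s₃ →
        M t s₁ = 1 → M t s₃ = 1 → M t s₂ = 1) ∧
    M.IsTotallyUnimodular := by
  -- l is strictly monotone
  have hl : StrictMono l := by
    intro i j hij
    by_contra hle
    push_neg at hle
    exact proper j i (fun h => absurd (h ▸ hij) (lt_irrefl j))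
      (Set.Icc_subset_Icc hle (hsorted hij).le)
  -- characterize intersection
  have hint : ∀ t s : Fin k,
      (Set.Icc (l t) (r t) ∩ Set.Icc (l s) (r s)).Nonempty ↔ l s ≤ r t ∧ l t ≤ r s := by
    intro t s
    rw [Set.Icc_inter_Icc, Set.nonempty_Icc, le_min_iff, max_le_iff, max_le_iff]
    constructor
    · rintro ⟨⟨_, h1⟩, ⟨h2, _⟩⟩; exact ⟨h1, h2⟩
    · rintro ⟨h1, h2⟩; exact ⟨⟨hlr t, h1⟩, ⟨h2, hlr s⟩⟩
  have hone : ∀ t s, M t s = 1 ↔ (l s ≤ r t.1 ∧ l t.1 ≤ r s) := by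
    intro t s
    rw [hM, hint]
    split_ifs with h
    · simp [h]
    · simp [h]
  constructor
  · intro t s₁ s₂ s₃ h12 h23 h1 h3
    rw [hone] at h1 h3 ⊢
    exact ⟨le_trans (hl h23).le h3.1, le_trans h1.2 (hsorted h12).le⟩
  · intro p f g hf hg
    -- sort the columns
    set σ : Equiv.Perm (Fin p) := Tuple.sort g with hσ
    have hmono : Monotone (g ∘ σ) := Tuple.monotone_sort g
    have hginj : Function.Injective (g ∘ σ) := hg.comp σ.injective
    have hgs : StrictMono (g ∘ σ) := hmono.strictMono_of_injective hginj
    -- the sorted submatrix is an interval matrix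
    have hsubm : (M.submatrix f (g ∘ σ)).det ∈ Set.range (SignType.cast : SignType → ℚ) := by
      apply interval_det
      intro i
      obtain ⟨c, hc⟩ := exists_bound_of_upward (fun j => l (f i).1 ≤ r ((g ∘ σ) j))
        (fun j j' hjj' h => le_trans h ((hsorted.comp hgs).monotone hjj'))
      obtain ⟨d, hd⟩ := exists_bound_of_upward (fun j => ¬ (l ((g ∘ σ) j) ≤ r (f i).1))
        (fun j j' hjj' h hcon => h (le_trans ((hl.comp hgs).monotone hjj') hcon))
      refine ⟨c, d, fun j => ?_⟩
      have : M.submatrix f (g ∘ σ) i j = M (f i) ((g ∘ σ) j) := rfl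
      rw [this, hM, hint]
      have h1 : l ((g ∘ σ) j) ≤ r (f i).1 ↔ j.val < d := by
        constructor
        · intro h
          by_contra hh
          exact ((hd j).mpr (Nat.le_of_not_lt hh)) h
        · intro h
          by_contra hh
          have := (hd j).mp hh
          omega
      rw [and_comm]
      congr 1
      rw [eq_iff_iff]
      exact and_congr (hc j) h1
    -- transfer via the sorting permutation
    have hperm : M.submatrix f (g ∘ σ) = (M.submatrix f g).submatrix id σ := by
      ext i j; rfl
    rw [hperm, Matrix.det_permute'] at hsubm
    rcases Int.units_eq_one_or (Equiv.Perm.sign σ) with hs | hs <;> rw [hs] at hsubm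
    · simpa using hsubm
    · simp only [Units.val_neg, Units.val_one, Int.cast_neg, Int.cast_one, neg_mul,
        one_mul] at hsubm
      have := neg_mem_signRange hsubm
      rwa [neg_neg] at this
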